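/- For any x ≥ 0, √(1 − e^{−x²}) ≤ erf(x) ≤ √(1 − e^{−4x²/π}). -/

import Mathlib

/-- The Gauss error function `erf(x) = (2/√π) ∫₀ˣ e^{-t²} dt`. -/
noncomputable def erf (x : ℝ) : ℝ :=
  (2 / Real.sqrt Real.pi) * ∫ t in (0 : ℝ)..x, Real.exp (-t ^ 2)

open Real Set Filter Topology MeasureTheory

namespace Chu

noncomputable def cc : ℝ := 2 / Real.sqrt Real.pi
noncomputable def aa : ℝ := 4 / Real.pi

lemma sqrtpi_pos : 0 < Real.sqrt π := Real.sqrt_pos.2 pi_pos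

lemma cc_pos : 0 < cc := div_pos two_pos sqrtpi_pos

lemma cc_sq : cc * cc = aa := by
  rw [cc, aa, div_mul_div_comm, Real.mul_self_sqrt pi_pos.le]
  norm_num

lemma aa_pos : 0 < aa := div_pos (by norm_num) pi_pos

lemma one_lt_aa : 1 < aa := by
  rw [aa, lt_div_iff₀ pi_pos, one_mul]
  nlinarith [pi_lt_d2]

lemma aa_lt : aa < 4 / 3 := by
  rw [aa, div_lt_div_iff₀ pi_pos (by norm_num)]
  nlinarith [pi_gt_three]

lemma aa_gt : 5 / 4 < aa := by
  rw [aa, lt_div_iff₀ pi_pos]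
  nlinarith [pi_lt_d2]

lemma cc_ge_one : 1 ≤ cc := by
  rw [cc, le_div_iff₀ sqrtpi_pos, one_mul]
  calc Real.sqrt π ≤ Real.sqrt 4 := Real.sqrt_le_sqrt (by nlinarith [pi_lt_d2])
  _ = 2 := by rw [show (4:ℝ) = 2 ^ 2 by norm_num, Real.sqrt_sq (by norm_num : (0:ℝ) ≤ 2)]

lemma cc_le_two : cc ≤ 2 := by
  rw [cc, div_le_iff₀ sqrtpi_pos]
  nlinarith [Real.one_le_sqrt.2 (by nlinarith [pi_gt_three] : (1:ℝ) ≤ π)]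

lemma cont_integrand : Continuous fun t : ℝ => Real.exp (-t ^ 2) := by continuity

lemma hasDerivAt_erf (x : ℝ) : HasDerivAt erf (cc * Real.exp (-x ^ 2)) x := by
  have h : HasDerivAt (fun x : ℝ => ∫ t in (0:ℝ)..x, Real.exp (-t ^ 2))
      (Real.exp (-x ^ 2)) x :=
    intervalIntegral.integral_hasDerivAt_right
      (cont_integrand.intervalIntegrable _ _)
      (cont_integrand.stronglyMeasurableAtFilter _ _)
      cont_integrand.continuousAt
  exact h.const_mul cc

lemma erf_zero : erf 0 = 0 := by simp [erf]

lemma erf_nonneg {x : ℝ} (hx : 0 ≤ x) : 0 ≤ erf x := by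
  apply mul_nonneg (le_of_lt cc_pos)
  exact intervalIntegral.integral_nonneg hx (fun t _ => (Real.exp_pos _).le)

lemma tendsto_erf : Tendsto erf atTop (𝓝 1) := by
  have hint : IntegrableOn (fun t : ℝ => Real.exp (-t ^ 2)) (Ioi 0) := by
    have := (integrable_exp_neg_mul_sq (by norm_num : (0:ℝ) < 1)).integrableOn
      (s := Ioi (0:ℝ))
    simpa using this
  have h := intervalIntegral_tendsto_integral_Ioi (0:ℝ) hint tendsto_id
  have hval : (∫ t in Ioi (0:ℝ), Real.exp (-t ^ 2)) = Real.sqrt π / 2 := by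
    have := integral_gaussian_Ioi 1
    simpa using this
  rw [hval] at h
  have h2 : Tendsto erf atTop (𝓝 (cc * (Real.sqrt π / 2))) := by
    exact (h.const_mul cc)
  have : cc * (Real.sqrt π / 2) = 1 := by
    rw [cc]
    field_simp
  rwa [this] at h2

lemma erf_mono : Monotone erf := by
  apply monotone_of_deriv_nonneg
  · exact fun x => (hasDerivAt_erf x).differentiableAt
  · intro x
    rw [(hasDerivAt_erf x).deriv]
    exact mul_nonneg cc_pos.le (Real.exp_pos _).le

lemma erf_le_one (x : ℝ) : erf x ≤ 1 := erf_mono.ge_of_tendsto tendsto_erf x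

/-! ### Shape lemmas -/

lemma monoIcc {f g : ℝ → ℝ} (hd : ∀ x, HasDerivAt f (g x) x) {a b : ℝ}
    (h : ∀ x ∈ Icc a b, 0 ≤ g x) : MonotoneOn f (Icc a b) := by
  apply monotoneOn_of_deriv_nonneg (convex_Icc a b)
    (fun x _ => (hd x).continuousAt.continuousWithinAt)
    (fun x _ => ((hd x).differentiableAt).differentiableWithinAt)
  intro x hx
  rw [interior_Icc] at hx
  rw [(hd x).deriv]
  exact h x (Ioo_subset_Icc_self hx)

lemma antiIci {f g : ℝ → ℝ} (hd : ∀ x, HasDerivAt f (g x) x) {s : ℝ}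
    (h : ∀ x ∈ Ici s, g x ≤ 0) : AntitoneOn f (Ici s) := by
  apply antitoneOn_of_deriv_nonpos (convex_Ici s)
    (fun x _ => (hd x).continuousAt.continuousWithinAt)
    (fun x _ => ((hd x).differentiableAt).differentiableWithinAt)
  intro x hx
  rw [interior_Ici] at hx
  rw [(hd x).deriv]
  exact h x (mem_Ici.2 (le_of_lt (mem_Ioi.1 hx)))

/-- If `f 0 = 0`, `f` increases then decreases (derivative sign change at `s`),
and `f p < 0` for some `p ≥ 0`, then `f` is nonneg on `[0, t]` and nonpos on `[t, ∞)`
for some `t ≥ 0`. -/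
lemma signChange {f g : ℝ → ℝ} (hd : ∀ x, HasDerivAt f (g x) x) (h0 : f 0 = 0)
    {s : ℝ} (hs : 0 ≤ s) (hg1 : ∀ x ∈ Icc 0 s, 0 ≤ g x) (hg2 : ∀ x ∈ Ici s, g x ≤ 0)
    {p : ℝ} (hp0 : 0 ≤ p) (hp : f p < 0) :
    ∃ t, 0 ≤ t ∧ (∀ x ∈ Icc 0 t, 0 ≤ f x) ∧ ∀ x ∈ Ici t, f x ≤ 0 := by
  have hmono := monoIcc hd hg1
  have hanti := antiIci hd hg2
  have hsp : s ≤ p := by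
    by_contra h
    push_neg at h
    have := hmono (left_mem_Icc.2 hs) (⟨hp0, h.le⟩ : p ∈ Icc 0 s) hp0
    rw [h0] at this; linarith
  have hfs : 0 ≤ f s := by
    have := hmono (left_mem_Icc.2 hs) (right_mem_Icc.2 hs) hs
    rwa [h0] at this
  obtain ⟨t, ht, hft⟩ := intermediate_value_Icc' hsp
      (fun x _ => (hd x).continuousAt.continuousWithinAt)
      (⟨hp.le, hfs⟩ : (0:ℝ) ∈ Icc (f p) (f s))
  refine ⟨t, hs.trans ht.1, ?_, ?_⟩
  · intro x hx
    rcases le_total x s with h1 | h1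
    · have := hmono (left_mem_Icc.2 hs) (⟨hx.1, h1⟩ : x ∈ Icc 0 s) hx.1
      rwa [h0] at this
    · have := hanti (h1 : x ∈ Ici s) (ht.1 : t ∈ Ici s) hx.2
      rwa [hft] at this
  · intro x hx
    have := hanti (ht.1 : t ∈ Ici s) (ht.1.trans hx : x ∈ Ici s) hx
    rwa [hft] at this

/-- If `f 0 ≥ 0`, `f` increases on `[0,t]`, decreases on `[t,∞)`, and `f → 0` at `∞`,
then `f ≥ 0` on `[0,∞)`. -/
lemma nonnegOfShape {f g : ℝ → ℝ} (hd : ∀ x, HasDerivAt f (g x) x) (h0 : 0 ≤ f 0)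
    {t : ℝ} (ht : 0 ≤ t) (hg1 : ∀ x ∈ Icc 0 t, 0 ≤ g x) (hg2 : ∀ x ∈ Ici t, g x ≤ 0)
    (hlim : Tendsto f atTop (𝓝 0)) :
    ∀ x, 0 ≤ x → 0 ≤ f x := by
  intro x hx
  rcases le_total x t with h1 | h1
  · have := monoIcc hd hg1 (left_mem_Icc.2 ht) (⟨hx, h1⟩ : x ∈ Icc 0 t) hx
    linarith
  · have hanti := antiIci hd hg2
    exact le_of_tendsto hlim (eventually_atTop.2
      ⟨x, fun y hy => hanti (h1 : x ∈ Ici t) (h1.trans hy : y ∈ Ici t) hy⟩)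

/-! ### Lower bound -/

noncomputable def psi (x : ℝ) : ℝ := cc * erf x - x

lemma hasDerivAt_psi (x : ℝ) : HasDerivAt psi (aa * Real.exp (-x ^ 2) - 1) x := by
  have h := ((hasDerivAt_erf x).const_mul cc).sub (hasDerivAt_id x)
  refine h.congr_deriv ?_
  rw [← cc_sq]; ring

lemma psi_exists : ∃ t, 0 ≤ t ∧ (∀ x ∈ Icc 0 t, 0 ≤ psi x) ∧ ∀ x ∈ Ici t, psi x ≤ 0 := by
  set s := Real.sqrt (Real.log aa) with hs
  have hlog : 0 ≤ Real.log aa := Real.log_nonneg one_lt_aa.le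
  apply signChange hasDerivAt_psi (by simp [psi, erf_zero]) (Real.sqrt_nonneg _)
    (s := s) (p := 3)
  · intro x hx
    have hx2 : x ^ 2 ≤ Real.log aa := by
      have := Real.sq_sqrt hlog
      nlinarith [hx.1, hx.2]
    have h3 : aa⁻¹ ≤ Real.exp (-x ^ 2) := by
      rw [← Real.exp_log aa_pos, ← Real.exp_neg]
      exact Real.exp_le_exp.2 (by linarith)
    have h2 : aa * aa⁻¹ ≤ aa * Real.exp (-x ^ 2) :=
      mul_le_mul_of_nonneg_left h3 aa_pos.le
    rw [mul_inv_cancel₀ aa_pos.ne'] at h2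
    linarith
  · intro x hx
    have hxs : Real.sqrt (Real.log aa) ≤ x := hx
    have hx0 : (0:ℝ) ≤ x := (Real.sqrt_nonneg _).trans hxs
    have hx2 : Real.log aa ≤ x ^ 2 := by
      have := Real.sq_sqrt hlog
      nlinarith [hxs, Real.sqrt_nonneg (Real.log aa)]
    have h3 : Real.exp (-x ^ 2) ≤ aa⁻¹ := by
      rw [← Real.exp_log aa_pos, ← Real.exp_neg]
      exact Real.exp_le_exp.2 (by linarith)
    have h2 : aa * Real.exp (-x ^ 2) ≤ aa * aa⁻¹ :=
      mul_le_mul_of_nonneg_left h3 aa_pos.le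
    rw [mul_inv_cancel₀ aa_pos.ne'] at h2
    linarith
  · norm_num
  · have h1 : cc * erf 3 ≤ 2 := by
      calc cc * erf 3 ≤ cc * 1 := by
            exact mul_le_mul_of_nonneg_left (erf_le_one 3) cc_pos.le
      _ ≤ 2 := by linarith [cc_le_two]
    simp only [psi]; linarith

noncomputable def phi (x : ℝ) : ℝ := erf x ^ 2 - (1 - Real.exp (-x ^ 2))

lemma hasDerivAt_phi (x : ℝ) :
    HasDerivAt phi (2 * Real.exp (-x ^ 2) * psi x) x := by
  have h1 : HasDerivAt (fun x : ℝ => Real.exp (-x ^ 2))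
      (Real.exp (-x ^ 2) * (-(2 * x ^ 1))) x := ((hasDerivAt_pow 2 x).neg).exp
  have h := ((hasDerivAt_erf x).pow 2).sub ((h1.const_sub 1))
  refine h.congr_deriv ?_
  simp only [psi]
  ring

lemma tendsto_exp_neg_sq : Tendsto (fun x : ℝ => Real.exp (-x ^ 2)) atTop (𝓝 0) := by
  apply Real.tendsto_exp_atBot.comp
  have h : Tendsto (fun x : ℝ => x ^ 2) atTop atTop :=
    tendsto_pow_atTop (by norm_num)
  exact tendsto_neg_atBot_iff.2 h

lemma tendsto_phi : Tendsto phi atTop (𝓝 0) := by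
  have h1 : Tendsto (fun x => erf x ^ 2) atTop (𝓝 (1 ^ 2)) := tendsto_erf.pow 2
  have h2 : Tendsto (fun x : ℝ => 1 - Real.exp (-x ^ 2)) atTop (𝓝 (1 - 0)) :=
    tendsto_const_nhds.sub tendsto_exp_neg_sq
  have := h1.sub h2
  norm_num at this
  exact this

lemma phi_nonneg : ∀ x, 0 ≤ x → 0 ≤ phi x := by
  obtain ⟨t, ht0, h1, h2⟩ := psi_exists
  apply nonnegOfShape hasDerivAt_phi (by simp [phi, erf_zero]) ht0
  · intro x hx
    have := h1 x hx
    positivity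
  · intro x hx
    have := h2 x hx
    have he : (0:ℝ) < 2 * Real.exp (-x ^ 2) := by positivity
    exact mul_nonpos_of_nonneg_of_nonpos he.le this
  · exact tendsto_phi

lemma lower_bound {x : ℝ} (hx : 0 ≤ x) :
    Real.sqrt (1 - Real.exp (-x ^ 2)) ≤ erf x := by
  have h := phi_nonneg x hx
  simp only [phi] at h
  have h2 : 1 - Real.exp (-x ^ 2) ≤ erf x ^ 2 := by linarith
  calc Real.sqrt (1 - Real.exp (-x ^ 2)) ≤ Real.sqrt (erf x ^ 2) :=
        Real.sqrt_le_sqrt h2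
  _ = erf x := Real.sqrt_sq (erf_nonneg hx)

/-! ### Upper bound -/

noncomputable def vv (y : ℝ) : ℝ := Real.exp ((2 - aa) * y) * (1 + 2 * (1 - aa) * y) - 1

lemma hasDerivAt_vv (y : ℝ) :
    HasDerivAt vv (Real.exp ((2 - aa) * y) * ((4 - 3 * aa) + 2 * (2 - aa) * (1 - aa) * y)) y := by
  have h1 : HasDerivAt (fun y : ℝ => Real.exp ((2 - aa) * y))
      (Real.exp ((2 - aa) * y) * (2 - aa)) y := by
    have := ((hasDerivAt_id y).const_mul (2 - aa)).exp
    simpa using this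
  have h2 : HasDerivAt (fun y : ℝ => 1 + 2 * (1 - aa) * y) (2 * (1 - aa)) y := by
    have := ((hasDerivAt_id y).const_mul (2 * (1 - aa))).const_add 1
    simpa using this
  have h := (h1.mul h2).sub_const 1
  refine h.congr_deriv ?_
  ring

lemma vv_exists : ∃ t, 0 ≤ t ∧ (∀ x ∈ Icc 0 t, 0 ≤ vv x) ∧ ∀ x ∈ Ici t, vv x ≤ 0 := by
  have hA : (0:ℝ) < 4 - 3 * aa := by linarith [aa_lt]
  have hB : (0:ℝ) < 2 * (2 - aa) * (aa - 1) := by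
    have := one_lt_aa
    have := aa_lt
    nlinarith
  set y0 : ℝ := (4 - 3 * aa) / (2 * (2 - aa) * (aa - 1)) with hy0
  have hy0pos : 0 < y0 := div_pos hA hB
  apply signChange hasDerivAt_vv (by simp [vv]) hy0pos.le (p := 2)
  · intro y hy
    apply mul_nonneg (Real.exp_pos _).le
    have : y ≤ y0 := hy.2
    rw [hy0, le_div_iff₀ hB] at this
    nlinarith
  · intro y hy
    apply mul_nonpos_of_nonneg_of_nonpos (Real.exp_pos _).le
    have : y0 ≤ y := hy
    rw [hy0, div_le_iff₀ hB] at this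
    nlinarith
  · norm_num
  · have h5 : 1 + 2 * (1 - aa) * 2 < 0 := by linarith [aa_gt]
    have := mul_nonpos_of_nonneg_of_nonpos (Real.exp_pos ((2 - aa) * 2)).le h5.le
    simp only [vv]
    linarith

noncomputable def uu (x : ℝ) : ℝ := aa * x * Real.exp ((1 - aa) * x ^ 2) - cc * erf x

lemma hasDerivAt_uu (x : ℝ) :
    HasDerivAt uu (aa * Real.exp (-x ^ 2) * vv (x ^ 2)) x := by
  have h1 : HasDerivAt (fun x : ℝ => Real.exp ((1 - aa) * x ^ 2))
      (Real.exp ((1 - aa) * x ^ 2) * ((1 - aa) * (2 * x ^ 1))) x :=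
    ((hasDerivAt_pow 2 x).const_mul (1 - aa)).exp
  have h2 : HasDerivAt (fun x : ℝ => aa * x) aa x := by
    simpa using (hasDerivAt_id x).const_mul aa
  have h := (h2.mul h1).sub ((hasDerivAt_erf x).const_mul cc)
  refine h.congr_deriv ?_
  have hexp : Real.exp ((1 - aa) * x ^ 2) =
      Real.exp (-x ^ 2) * Real.exp ((2 - aa) * x ^ 2) := by
    rw [← Real.exp_add]; ring_nf
  have hc : cc * (cc * Real.exp (-x ^ 2)) = aa * Real.exp (-x ^ 2) := by
    rw [← cc_sq]; ring
  simp only [vv]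
  rw [hexp, hc]
  ring

lemma uu_ten_neg : uu 10 < 0 := by
  have hterm1 : aa * 10 * Real.exp ((1 - aa) * 10 ^ 2) ≤ 40 / 81 := by
    have he1 : (1 - aa) * 10 ^ 2 ≤ -26 := by
      have h100 : (100:ℝ) * aa = 400 / π := by rw [aa]; ring
      have : (126:ℝ) ≤ 100 * aa := by
        rw [h100, le_div_iff₀ pi_pos]
        nlinarith [pi_lt_d2]
      nlinarith
    have he2 : Real.exp ((1 - aa) * 10 ^ 2) ≤ Real.exp (-26) := Real.exp_le_exp.2 he1
    have he3 : Real.exp (-26 : ℝ) ≤ 1 / 27 := by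
      rw [Real.exp_neg, inv_le_comm₀ (Real.exp_pos _) (by norm_num : (0:ℝ) < 1/27)]
      have := Real.add_one_le_exp (26:ℝ)
      norm_num
      linarith
    have ha : aa * 10 ≤ 40 / 3 := by linarith [aa_lt]
    calc aa * 10 * Real.exp ((1 - aa) * 10 ^ 2) ≤ (40 / 3) * (1 / 27) := by
          apply mul_le_mul ha (he2.trans he3) (Real.exp_pos _).le (by norm_num)
    _ = 40 / 81 := by norm_num
  have herf : (7:ℝ) / 10 ≤ erf 10 := by
    have h := lower_bound (by norm_num : (0:ℝ) ≤ 10)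
    have hexp : Real.exp (-(10:ℝ) ^ 2) ≤ 1 / 2 := by
      calc Real.exp (-(10:ℝ) ^ 2) ≤ Real.exp (-1) := Real.exp_le_exp.2 (by norm_num)
      _ ≤ 1 / 2 := by
          rw [Real.exp_neg, inv_le_comm₀ (Real.exp_pos _) (by norm_num : (0:ℝ) < 1/2)]
          have := Real.add_one_le_exp (1:ℝ)
          norm_num
          linarith
    have hsq : ((7:ℝ) / 10) ^ 2 ≤ 1 - Real.exp (-(10:ℝ) ^ 2) := by nlinarith
    have h7 : (7:ℝ) / 10 ≤ Real.sqrt (1 - Real.exp (-(10:ℝ) ^ 2)) := by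
      rw [show (7:ℝ)/10 = Real.sqrt (((7:ℝ)/10)^2) by
        rw [Real.sqrt_sq (by norm_num : (0:ℝ) ≤ 7/10)]]
      exact Real.sqrt_le_sqrt hsq
    exact le_trans h7 h
  have hcerf : (7:ℝ) / 10 ≤ cc * erf 10 := by
    calc (7:ℝ) / 10 = 1 * (7 / 10) := by norm_num
    _ ≤ cc * erf 10 := by
        apply mul_le_mul cc_ge_one herf (by norm_num) (by linarith [cc_pos])
  show aa * 10 * Real.exp ((1 - aa) * 10 ^ 2) - cc * erf 10 < 0
  exact lt_of_le_of_lt (sub_le_sub hterm1 hcerf) (by norm_num)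

lemma uu_exists : ∃ t, 0 ≤ t ∧ (∀ x ∈ Icc 0 t, 0 ≤ uu x) ∧ ∀ x ∈ Ici t, uu x ≤ 0 := by
  obtain ⟨tv, htv0, hv1, hv2⟩ := vv_exists
  apply signChange hasDerivAt_uu (by simp [uu, erf_zero]) (Real.sqrt_nonneg tv)
    (p := 10)
  · intro x hx
    apply mul_nonneg (mul_nonneg aa_pos.le (Real.exp_pos _).le)
    apply hv1
    constructor
    · positivity
    · have := Real.sq_sqrt htv0
      nlinarith [hx.1, hx.2]
  · intro x hx
    apply mul_nonpos_of_nonneg_of_nonpos (mul_nonneg aa_pos.le (Real.exp_pos _).le)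
    apply hv2
    have hxs : Real.sqrt tv ≤ x := hx
    have hx0 : (0:ℝ) ≤ x := (Real.sqrt_nonneg _).trans hxs
    have := Real.sq_sqrt htv0
    simp only [mem_Ici]
    nlinarith [hxs, Real.sqrt_nonneg tv]
  · norm_num
  · exact uu_ten_neg

noncomputable def chi (x : ℝ) : ℝ :=
  (1 - Real.exp (-(4 / Real.pi) * x ^ 2)) - erf x ^ 2

lemma hasDerivAt_chi (x : ℝ) :
    HasDerivAt chi (2 * Real.exp (-x ^ 2) * uu x) x := by
  have h1 : HasDerivAt (fun x : ℝ => Real.exp (-(4 / Real.pi) * x ^ 2))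
      (Real.exp (-(4 / Real.pi) * x ^ 2) * (-(4 / Real.pi) * (2 * x ^ 1))) x :=
    ((hasDerivAt_pow 2 x).const_mul (-(4 / Real.pi))).exp
  have h := (h1.const_sub 1).sub ((hasDerivAt_erf x).pow 2)
  refine h.congr_deriv ?_
  have haa : -(4 / Real.pi) * x ^ 2 = -x ^ 2 + (1 - aa) * x ^ 2 := by
    rw [show aa = 4 / Real.pi from rfl]; ring
  rw [haa, Real.exp_add]
  simp only [uu]
  rw [show aa = 4 / Real.pi from rfl]
  ring

lemma tendsto_chi : Tendsto chi atTop (𝓝 0) := by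
  have hexp : Tendsto (fun x : ℝ => Real.exp (-(4 / Real.pi) * x ^ 2)) atTop (𝓝 0) := by
    apply Real.tendsto_exp_atBot.comp
    have h : Tendsto (fun x : ℝ => (4 / Real.pi) * x ^ 2) atTop atTop := by
      apply Tendsto.const_mul_atTop (by positivity)
      exact tendsto_pow_atTop (by norm_num)
    have h2 : Tendsto (fun x : ℝ => -((4 / Real.pi) * x ^ 2)) atTop atBot :=
      tendsto_neg_atBot_iff.2 h
    exact Filter.Tendsto.congr (fun x => by ring) h2
  have h1 : Tendsto (fun x : ℝ => 1 - Real.exp (-(4 / Real.pi) * x ^ 2)) atTop (𝓝 (1 - 0)) :=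
    tendsto_const_nhds.sub hexp
  have h2 : Tendsto (fun x => erf x ^ 2) atTop (𝓝 (1 ^ 2)) := tendsto_erf.pow 2
  have := h1.sub h2
  have h0 : ((1:ℝ) - 0) - 1 ^ 2 = 0 := by norm_num
  rw [h0] at this
  exact this

lemma chi_nonneg : ∀ x, 0 ≤ x → 0 ≤ chi x := by
  obtain ⟨t, ht0, h1, h2⟩ := uu_exists
  apply nonnegOfShape hasDerivAt_chi (by simp [chi, erf_zero]) ht0
  · intro x hx
    have := h1 x hx
    positivity
  · intro x hx
    have := h2 x hx
    have he : (0:ℝ) < 2 * Real.exp (-x ^ 2) := by positivity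
    exact mul_nonpos_of_nonneg_of_nonpos he.le this
  · exact tendsto_chi

lemma upper_bound {x : ℝ} (hx : 0 ≤ x) :
    erf x ≤ Real.sqrt (1 - Real.exp (-(4 / Real.pi) * x ^ 2)) := by
  have h := chi_nonneg x hx
  simp only [chi] at h
  have h2 : erf x ^ 2 ≤ 1 - Real.exp (-(4 / Real.pi) * x ^ 2) := by linarith
  calc erf x = Real.sqrt (erf x ^ 2) := (Real.sqrt_sq (erf_nonneg hx)).symm
  _ ≤ Real.sqrt (1 - Real.exp (-(4 / Real.pi) * x ^ 2)) := Real.sqrt_le_sqrt h2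

end Chu

/-- Chu's inequalities: for `x ≥ 0`,
    `√(1 - e^{-x²}) ≤ erf(x) ≤ √(1 - e^{-4x²/π})`. -/
theorem chu_inequalities (x : ℝ) (hx : 0 ≤ x) :
    Real.sqrt (1 - Real.exp (-x ^ 2)) ≤ erf x ∧
      erf x ≤ Real.sqrt (1 - Real.exp (-(4 / Real.pi) * x ^ 2)) := by
  exact ⟨Chu.lower_bound hx, Chu.upper_bound hx⟩
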